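/- arXiv:2005.12360 — 7 statements merged into one kernel-verified Lean document; each statement's English description precedes it below -/
import Mathlib

section
/- For any vector X = (x_1,...,x_n) of real numbers and weights λ_1,...,λ_n with 0 < λ_i < 1 and ∑_k λ_k = 1, we have (1/2)·∑_{i,j} λ_i λ_j |e^{x_i} − e^{x_j}| ≤ ‖X‖_∞ · (∑_k λ_k e^{x_k}). -/
private lemma tanh_aux : ∀ t : ℝ, 0 ≤ t → 2 * (Real.exp t - 1) ≤ t * (Real.exp t + 1) := by
  have hmono : Monotone (fun t : ℝ => t * (Real.exp t + 1) - 2 * (Real.exp t - 1)) := by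
    have hder : ∀ t : ℝ, HasDerivAt (fun t : ℝ => t * (Real.exp t + 1) - 2 * (Real.exp t - 1))
        (1 * (Real.exp t + 1) + t * Real.exp t - 2 * Real.exp t) t := by
      intro t
      exact ((hasDerivAt_id t).mul ((Real.hasDerivAt_exp t).add_const 1)).sub
        (((Real.hasDerivAt_exp t).sub_const 1).const_mul 2)
    apply monotone_of_deriv_nonneg
    · exact fun t => ((hder t).differentiableAt)
    · intro t
      rw [(hder t).deriv]
      have h1 : (-t) + 1 ≤ Real.exp (-t) := Real.add_one_le_exp (-t)
      have h2 : Real.exp (-t) * Real.exp t = 1 := by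
        rw [← Real.exp_add]; simp
      have h3 : (0:ℝ) < Real.exp t := Real.exp_pos t
      nlinarith
  intro t ht
  have := hmono ht
  simp only [Real.exp_zero] at this
  linarith

private lemma exp_abs_sub_le (a b : ℝ) :
    |Real.exp a - Real.exp b| ≤ ((|a| + |b|) / 2) * (Real.exp a + Real.exp b) := by
  have key : ∀ a b : ℝ, b ≤ a →
      Real.exp a - Real.exp b ≤ ((a - b) / 2) * (Real.exp a + Real.exp b) := by
    intro a b hba
    have ht := tanh_aux (a - b) (by linarith)
    have hb : (0:ℝ) < Real.exp b := Real.exp_pos b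
    have hab : Real.exp (a - b) * Real.exp b = Real.exp a := by
      rw [← Real.exp_add]; ring_nf
    nlinarith
  have hpos : (0:ℝ) ≤ Real.exp a + Real.exp b :=
    le_of_lt (by positivity)
  rcases le_total b a with h | h
  · rw [abs_of_nonneg (by simpa [sub_nonneg] using Real.exp_le_exp.mpr h)]
    refine (key a b h).trans ?_
    apply mul_le_mul_of_nonneg_right _ hpos
    have h1 := le_abs_self a
    have h2 := neg_abs_le b
    linarith
  · rw [abs_of_nonpos (by simpa [sub_nonpos] using Real.exp_le_exp.mpr h), neg_sub]
    refine (key b a h).trans ?_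
    have hr : ((b - a) / 2) * (Real.exp b + Real.exp a)
        ≤ ((|a| + |b|) / 2) * (Real.exp b + Real.exp a) := by
      apply mul_le_mul_of_nonneg_right _ (by positivity)
      have h1 := le_abs_self b
      have h2 := neg_abs_le a
      linarith
    linarith [hr]

/-- Exponential smoothing inequality (α = 1 version):
for weights λ with 0 < λ i < 1 summing to 1,
(1/2)·∑_{i,j} λ i λ j |e^{x i} − e^{x j}| ≤ ‖X‖_∞ · ∑_k λ k e^{x k}. -/
theorem exp_smoothing_ineq (n : ℕ) (X lam : Fin n → ℝ)
    (hlam : ∀ i, 0 < lam i ∧ lam i < 1)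
    (hsum : ∑ i, lam i = 1) :
    (1 / 2) * ∑ i, ∑ j, lam i * lam j * |Real.exp (X i) - Real.exp (X j)| ≤
      (⨆ i, |X i|) * ∑ k, lam k * Real.exp (X k) := by
  rcases Nat.eq_zero_or_pos n with rfl | hn
  · simp
  haveI : Nonempty (Fin n) := Fin.pos_iff_nonempty.mp hn
  set M := ⨆ i, |X i| with hMdef
  have hM : ∀ i, |X i| ≤ M :=
    fun i => le_ciSup (f := fun i => |X i|) (Set.Finite.bddAbove (Set.finite_range _)) i
  have hM0 : 0 ≤ M := le_trans (abs_nonneg _) (hM (Classical.arbitrary _))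
  set S := ∑ k, lam k * Real.exp (X k) with hSdef
  have hstep : (1 / 2) * ∑ i, ∑ j, lam i * lam j * |Real.exp (X i) - Real.exp (X j)| ≤
      (1 / 2) * ∑ i, ∑ j, lam i * lam j * (M * (Real.exp (X i) + Real.exp (X j))) := by
    gcongr with i _ j _
    · exact mul_nonneg (hlam i).1.le (hlam j).1.le
    · refine (exp_abs_sub_le (X i) (X j)).trans ?_
      apply mul_le_mul_of_nonneg_right _ (by positivity)
      have := hM i; have := hM j
      linarith
  refine hstep.trans ?_
  have hinner : ∀ i, ∑ j, lam i * lam j * (M * (Real.exp (X i) + Real.exp (X j)))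
      = M * (lam i * Real.exp (X i)) + M * lam i * S := by
    intro i
    have : ∀ j, lam i * lam j * (M * (Real.exp (X i) + Real.exp (X j)))
        = (M * (lam i * Real.exp (X i))) * lam j + (M * lam i) * (lam j * Real.exp (X j)) := by
      intro j; ring
    rw [Finset.sum_congr rfl (fun j _ => this j), Finset.sum_add_distrib,
      ← Finset.mul_sum, ← Finset.mul_sum, hsum, hSdef]
    ring
  rw [Finset.sum_congr rfl (fun i _ => hinner i), Finset.sum_add_distrib,
    ← Finset.mul_sum, ← hSdef]
  have : ∑ i, M * lam i * S = M * S := by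
    rw [← Finset.sum_mul, ← Finset.mul_sum, hsum]; ring
  rw [this]
  ring_nf
  linarith [le_refl (M * S)]
end

section
/- Let Q, Q̃ ∈ ℝ^n and β > 0. Define the Boltzmann (softmax) distribution Exp_β(Q)_j = e^{β q_j} / ∑_i e^{β q_i}. Then ∑_j |Exp_β(Q)_j − Exp_β(Q̃)_j| ≤ 2β · max_i |q_i − q̃_i|. -/
/-- The Boltzmann (softmax) distribution `Exp_β(Q)_j = e^{β q_j} / ∑_i e^{β q_i}`
is Lipschitz in ℓ1-norm with respect to the sup-norm of the Q-values:
‖Exp_β(Q) − Exp_β(Q̃)‖₁ ≤ 2β‖Q − Q̃‖_∞. -/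
theorem boltzmann_l1_lipschitz (n : ℕ) (β : ℝ) (hβ : 0 < β) (Q Qt : Fin n → ℝ) :
    ∑ j, |Real.exp (β * Q j) / (∑ i, Real.exp (β * Q i)) -
          Real.exp (β * Qt j) / (∑ i, Real.exp (β * Qt i))| ≤
      2 * β * ⨆ i, |Q i - Qt i| := by
  rcases Nat.eq_zero_or_pos n with hn | hn
  · subst hn
    simp [Real.iSup_of_isEmpty]
  haveI : Nonempty (Fin n) := ⟨⟨0, hn⟩⟩
  set M := ⨆ i, |Q i - Qt i| with hMdef
  have hbdd : BddAbove (Set.range fun i => |Q i - Qt i|) :=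
    Set.Finite.bddAbove (Set.finite_range _)
  have hM : ∀ i, |Q i - Qt i| ≤ M := fun i => le_ciSup hbdd i
  have hM' : ∀ i, |Qt i - Q i| ≤ M := fun i => by rw [abs_sub_comm]; exact hM i
  have hM0 : 0 ≤ M := le_trans (abs_nonneg _) (hM ⟨0, hn⟩)
  set e : ℝ → Fin n → ℝ := fun t i => Real.exp (β * (Q i + t * (Qt i - Q i))) with he
  set S : ℝ → ℝ := fun t => ∑ i, e t i with hS
  have hepos : ∀ t i, 0 < e t i := fun t i => Real.exp_pos _
  have hSpos : ∀ t, 0 < S t := fun t =>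
    Finset.sum_pos (fun i _ => hepos t i) Finset.univ_nonempty
  set p : ℝ → Fin n → ℝ := fun t j => e t j / S t with hp
  set ε : Fin n → ℝ := fun j => if p 0 j ≤ p 1 j then 1 else -1 with hεdef
  have hε : ∀ j, |ε j| = 1 := by
    intro j; simp only [hεdef]; split <;> simp
  have habs : ∀ j, |p 1 j - p 0 j| = ε j * (p 1 j - p 0 j) := by
    intro j; simp only [hεdef]; split
    · rw [abs_of_nonneg (by linarith), one_mul]
    · rename_i h; push_neg at h
      rw [abs_of_neg (by linarith)]; ring
  -- derivatives
  have hde : ∀ t i, HasDerivAt (fun t => e t i) (β * (Qt i - Q i) * e t i) t := by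
    intro t i
    have h1 : HasDerivAt (fun t : ℝ => β * (Q i + t * (Qt i - Q i)))
        (β * (Qt i - Q i)) t := by
      have := (((hasDerivAt_id t).mul_const (Qt i - Q i)).const_add (Q i)).const_mul β
      simpa using this
    simpa [he, mul_comm] using h1.exp
  have hdS : ∀ t, HasDerivAt S (∑ i, β * (Qt i - Q i) * e t i) t := fun t =>
    HasDerivAt.fun_sum fun i _ => hde t i
  set p' : ℝ → Fin n → ℝ := fun t j =>
    (β * (Qt j - Q j) * e t j * S t - e t j * ∑ i, β * (Qt i - Q i) * e t i) /
      (S t) ^ 2 with hp'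
  have hdp : ∀ t j, HasDerivAt (fun t => p t j) (p' t j) t := fun t j =>
    (hde t j).div (hdS t) (hSpos t).ne'
  -- bound on the ℓ1 norm of the derivative
  have hsumabs : ∀ t, |∑ i, β * (Qt i - Q i) * e t i| ≤ β * M * S t := by
    intro t
    calc |∑ i, β * (Qt i - Q i) * e t i| ≤ ∑ i, |β * (Qt i - Q i) * e t i| :=
          Finset.abs_sum_le_sum_abs _ _
      _ ≤ ∑ i, β * M * e t i := by
          apply Finset.sum_le_sum
          intro i _
          rw [abs_mul, abs_mul, abs_of_pos hβ, abs_of_pos (hepos t i)]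
          exact mul_le_mul_of_nonneg_right
            (mul_le_mul_of_nonneg_left (hM' i) hβ.le) (hepos t i).le
      _ = β * M * S t := by rw [hS, Finset.mul_sum]
  have hbound : ∀ t, ∑ j, |p' t j| ≤ 2 * β * M := by
    intro t
    have hterm : ∀ j, |p' t j| ≤ 2 * β * M * (e t j / S t) := by
      intro j
      have hnum : |β * (Qt j - Q j) * e t j * S t -
          e t j * ∑ i, β * (Qt i - Q i) * e t i| ≤ 2 * β * M * (e t j * S t) := by
        have h1 : |β * (Qt j - Q j) * e t j * S t| ≤ β * M * (e t j * S t) := by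
          rw [abs_mul, abs_mul, abs_mul, abs_of_pos hβ, abs_of_pos (hepos t j),
            abs_of_pos (hSpos t)]
          have := mul_le_mul_of_nonneg_right
            (mul_le_mul_of_nonneg_left (hM' j) hβ.le)
            (mul_pos (hepos t j) (hSpos t)).le
          nlinarith [this]
        have h2 : |e t j * ∑ i, β * (Qt i - Q i) * e t i| ≤ β * M * (e t j * S t) := by
          rw [abs_mul, abs_of_pos (hepos t j)]
          have := mul_le_mul_of_nonneg_left (hsumabs t) (hepos t j).le
          nlinarith [this]
        calc |β * (Qt j - Q j) * e t j * S t -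
              e t j * ∑ i, β * (Qt i - Q i) * e t i|
            ≤ |β * (Qt j - Q j) * e t j * S t| +
              |e t j * ∑ i, β * (Qt i - Q i) * e t i| := abs_sub _ _
          _ ≤ 2 * β * M * (e t j * S t) := by linarith
      have hS2 : (0:ℝ) < (S t) ^ 2 := pow_pos (hSpos t) 2
      rw [hp', abs_div, abs_of_pos hS2]
      rw [div_le_iff₀ hS2]
      calc |β * (Qt j - Q j) * e t j * S t -
            e t j * ∑ i, β * (Qt i - Q i) * e t i|
          ≤ 2 * β * M * (e t j * S t) := hnum
        _ = 2 * β * M * (e t j / S t) * (S t) ^ 2 := by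
            field_simp
    calc ∑ j, |p' t j| ≤ ∑ j, 2 * β * M * (e t j / S t) :=
          Finset.sum_le_sum fun j _ => hterm j
      _ = 2 * β * M * (S t / S t) := by
          rw [← Finset.mul_sum, ← Finset.sum_div]
      _ = 2 * β * M := by rw [div_self (hSpos t).ne', mul_one]
  -- mean value inequality on φ
  set φ : ℝ → ℝ := fun t => ∑ j, ε j * p t j with hφ
  have hdφ : ∀ t, HasDerivAt φ (∑ j, ε j * p' t j) t := fun t =>
    HasDerivAt.fun_sum fun j _ => (hdp t j).const_mul _
  have key : ‖φ 1 - φ 0‖ ≤ 2 * β * M * ‖(1:ℝ) - 0‖ := by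
    apply Convex.norm_image_sub_le_of_norm_hasDerivWithin_le
      (f' := fun t => ∑ j, ε j * p' t j)
      (fun t _ => (hdφ t).hasDerivWithinAt) (fun t _ => ?_)
      convex_univ (Set.mem_univ (0:ℝ)) (Set.mem_univ (1:ℝ))
    calc ‖∑ j, ε j * p' t j‖ ≤ ∑ j, |ε j * p' t j| := Finset.abs_sum_le_sum_abs _ _
      _ = ∑ j, |p' t j| := by
          apply Finset.sum_congr rfl
          intro j _
          rw [abs_mul, hε j, one_mul]
      _ ≤ 2 * β * M := hbound t
  have key' : φ 1 - φ 0 ≤ 2 * β * M := by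
    have h1 : φ 1 - φ 0 ≤ ‖φ 1 - φ 0‖ := le_abs_self _
    have h2 : ‖(1:ℝ) - 0‖ = 1 := by norm_num
    rw [h2, mul_one] at key
    linarith
  -- identify the left-hand side with φ 1 - φ 0
  have hlhs : ∑ j, |Real.exp (β * Q j) / (∑ i, Real.exp (β * Q i)) -
      Real.exp (β * Qt j) / (∑ i, Real.exp (β * Qt i))| = φ 1 - φ 0 := by
    have hq0 : ∀ i, Q i + (0:ℝ) * (Qt i - Q i) = Q i := fun i => by ring
    have hq1 : ∀ i, Q i + (1:ℝ) * (Qt i - Q i) = Qt i := fun i => by ring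
    have hp0 : ∀ j, p 0 j = Real.exp (β * Q j) / (∑ i, Real.exp (β * Q i)) := by
      intro j; simp only [hp, hS, he, hq0]
    have hp1 : ∀ j, p 1 j = Real.exp (β * Qt j) / (∑ i, Real.exp (β * Qt i)) := by
      intro j; simp only [hp, hS, he, hq1]
    calc ∑ j, |Real.exp (β * Q j) / (∑ i, Real.exp (β * Q i)) -
          Real.exp (β * Qt j) / (∑ i, Real.exp (β * Qt i))|
        = ∑ j, |p 1 j - p 0 j| := by
          apply Finset.sum_congr rfl
          intro j _
          rw [hp0 j, hp1 j, abs_sub_comm]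
      _ = ∑ j, ε j * (p 1 j - p 0 j) := Finset.sum_congr rfl fun j _ => habs j
      _ = φ 1 - φ 0 := by
          simp only [hφ, mul_sub, Finset.sum_sub_distrib]
  rw [hlhs]
  exact key'
end

section
/- For any β > 0 and ξ ≥ 0, the function g(Q) := ∑_j (e^{β q_j}/∑_i e^{β q_i}) q_j (the Boltzmann expectation of Q under its own softmax distribution) satisfies |g(Q) − g(Q̃)| ≤ (1 + ξβ) ‖Q − Q̃‖_∞ for all vectors Q, Q̃ ∈ ℝ^n with ‖Q‖_∞ ≤ ξ. -/
open Finset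

private lemma wsum_sq_le {n : ℕ} (w x : Fin n → ℝ) (hw : ∀ j, 0 ≤ w j)
    (hw1 : ∑ j, w j = 1) {c : ℝ} (hx : ∀ j, |x j| ≤ c) :
    ∑ j, w j * (x j - ∑ i, w i * x i) ^ 2 ≤ c ^ 2 := by
  set xb := ∑ i, w i * x i with hxb
  have h1 : ∑ j, w j * (x j - xb) ^ 2 = (∑ j, w j * x j ^ 2) - xb ^ 2 := by
    have h : ∀ j : Fin n, w j * (x j - xb) ^ 2
        = w j * x j ^ 2 - (2 * xb) * (w j * x j) + (xb ^ 2) * w j := fun j => by ring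
    rw [Finset.sum_congr rfl fun j _ => h j]
    rw [Finset.sum_add_distrib, Finset.sum_sub_distrib, ← Finset.mul_sum, ← Finset.mul_sum,
      hw1, ← hxb]
    ring
  have h2 : ∑ j, w j * x j ^ 2 ≤ c ^ 2 := by
    calc ∑ j, w j * x j ^ 2 ≤ ∑ j, w j * c ^ 2 := by
          refine Finset.sum_le_sum fun j _ => mul_le_mul_of_nonneg_left ?_ (hw j)
          have := hx j
          nlinarith [abs_nonneg (x j), sq_abs (x j)]
      _ = c ^ 2 := by rw [← Finset.sum_mul, hw1, one_mul]
  nlinarith [sq_nonneg xb]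

private lemma cov_abs_le {n : ℕ} (w v q : Fin n → ℝ) (hw : ∀ j, 0 ≤ w j)
    (hw1 : ∑ j, w j = 1) {d ξ : ℝ} (hd : 0 ≤ d) (hξ : 0 ≤ ξ)
    (hv : ∀ j, |v j| ≤ d) (hq : ∀ j, |q j| ≤ ξ) :
    |(∑ j, w j * (v j * q j)) - (∑ j, w j * v j) * (∑ j, w j * q j)| ≤ d * ξ := by
  set vb := ∑ j, w j * v j with hvb
  set qb := ∑ j, w j * q j with hqb
  have expand : (∑ j, w j * (v j * q j)) - vb * qb
      = ∑ j, w j * ((v j - vb) * (q j - qb)) := by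
    have h : ∀ j : Fin n, w j * ((v j - vb) * (q j - qb))
        = w j * (v j * q j) - qb * (w j * v j) - vb * (w j * q j) + (vb * qb) * w j :=
      fun j => by ring
    rw [Finset.sum_congr rfl fun j _ => h j]
    rw [Finset.sum_add_distrib, Finset.sum_sub_distrib, Finset.sum_sub_distrib,
      ← Finset.mul_sum, ← Finset.mul_sum, ← Finset.mul_sum, hw1, ← hvb, ← hqb]
    ring
  have cs : (∑ j, w j * ((v j - vb) * (q j - qb))) ^ 2
      ≤ (∑ j, w j * (v j - vb) ^ 2) * (∑ j, w j * (q j - qb) ^ 2) := by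
    have h := Finset.sum_mul_sq_le_sq_mul_sq Finset.univ
      (fun j => Real.sqrt (w j) * (v j - vb)) (fun j => Real.sqrt (w j) * (q j - qb))
    have e1 : ∀ j : Fin n, (Real.sqrt (w j) * (v j - vb)) * (Real.sqrt (w j) * (q j - qb))
        = w j * ((v j - vb) * (q j - qb)) := by
      intro j
      rw [show (Real.sqrt (w j) * (v j - vb)) * (Real.sqrt (w j) * (q j - qb))
          = (Real.sqrt (w j) * Real.sqrt (w j)) * ((v j - vb) * (q j - qb)) by ring,
        Real.mul_self_sqrt (hw j)]
    have e2 : ∀ (y : Fin n → ℝ) (j : Fin n),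
        (Real.sqrt (w j) * y j) ^ 2 = w j * y j ^ 2 := by
      intro y j
      rw [mul_pow, Real.sq_sqrt (hw j)]
    rw [Finset.sum_congr rfl fun j _ => e1 j] at h
    rw [Finset.sum_congr rfl fun j _ => e2 (fun j => v j - vb) j] at h
    rw [Finset.sum_congr rfl fun j _ => e2 (fun j => q j - qb) j] at h
    exact h
  have hVv := wsum_sq_le w v hw hw1 hv
  have hVq := wsum_sq_le w q hw hw1 hq
  have hVvnn : 0 ≤ ∑ j, w j * (v j - vb) ^ 2 :=
    Finset.sum_nonneg fun j _ => mul_nonneg (hw j) (sq_nonneg _)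
  have hVqnn : 0 ≤ ∑ j, w j * (q j - qb) ^ 2 :=
    Finset.sum_nonneg fun j _ => mul_nonneg (hw j) (sq_nonneg _)
  rw [← hvb] at hVv
  rw [← hqb] at hVq
  have hsq : ((∑ j, w j * (v j * q j)) - vb * qb) ^ 2 ≤ (d * ξ) ^ 2 := by
    rw [expand]
    calc (∑ j, w j * ((v j - vb) * (q j - qb))) ^ 2
        ≤ (∑ j, w j * (v j - vb) ^ 2) * (∑ j, w j * (q j - qb) ^ 2) := cs
      _ ≤ (d * ξ) ^ 2 := by nlinarith
  have hdx : 0 ≤ d * ξ := mul_nonneg hd hξ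
  exact abs_le.mpr ⟨by nlinarith, by nlinarith⟩

/-- Lipschitz property of the soft value function g(Q) = E_{Exp_β(Q)}[Q]:
if ‖Q‖_∞ ≤ ξ then |g(Q) − g(Q̃)| ≤ (1 + ξβ)‖Q − Q̃‖_∞. -/
theorem soft_value_lipschitz (n : ℕ) (β ξ : ℝ) (hβ : 0 < β) (hξ : 0 ≤ ξ)
    (Q Qt : Fin n → ℝ) (hQ : ∀ j, |Q j| ≤ ξ) :
    |(∑ j, Real.exp (β * Q j) / (∑ i, Real.exp (β * Q i)) * Q j) -
      ∑ j, Real.exp (β * Qt j) / (∑ i, Real.exp (β * Qt i)) * Qt j| ≤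
      (1 + ξ * β) * ⨆ i, |Q i - Qt i| := by
  rcases Nat.eq_zero_or_pos n with h0 | hn
  · subst h0
    simp [Real.iSup_of_isEmpty]
  haveI : Nonempty (Fin n) := Fin.pos_iff_nonempty.mp hn
  set d := ⨆ i, |Q i - Qt i| with hdd
  set v : Fin n → ℝ := fun j => Q j - Qt j with hv
  have hbdd : BddAbove (Set.range fun i => |Q i - Qt i|) :=
    (Set.finite_range _).bddAbove
  have hvd : ∀ j, |v j| ≤ d := fun j => le_ciSup hbdd j
  have hd0 : 0 ≤ d := le_trans (abs_nonneg _) (hvd (Classical.arbitrary _))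
  set P : ℝ → Fin n → ℝ := fun t j => Qt j + t * v j with hP
  set Z : ℝ → ℝ := fun t => ∑ i, Real.exp (β * P t i) with hZ
  set S : ℝ → ℝ := fun t => ∑ j, Real.exp (β * P t j) * Q j with hS
  set F : ℝ → ℝ := fun t => S t / Z t with hF
  have hZpos : ∀ t, 0 < Z t := fun t =>
    Finset.sum_pos (fun i _ => Real.exp_pos _) Finset.univ_nonempty
  -- derivatives
  have hZd : ∀ t, HasDerivAt Z (∑ i, Real.exp (β * P t i) * (β * v i)) t := by
    intro t
    apply HasDerivAt.fun_sum
    intro i _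
    have h1 : HasDerivAt (fun t : ℝ => β * P t i) (β * v i) t := by
      simpa [hP] using (((hasDerivAt_id t).mul_const (v i)).const_add (Qt i)).const_mul β
    exact h1.exp
  have hSd : ∀ t, HasDerivAt S (∑ j, Real.exp (β * P t j) * (β * v j) * Q j) t := by
    intro t
    apply HasDerivAt.fun_sum
    intro j _
    have h1 : HasDerivAt (fun t : ℝ => β * P t j) (β * v j) t := by
      simpa [hP] using (((hasDerivAt_id t).mul_const (v j)).const_add (Qt j)).const_mul β
    exact h1.exp.mul_const (Q j)
  have hFd : ∀ t, HasDerivAt F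
      (((∑ j, Real.exp (β * P t j) * (β * v j) * Q j) * Z t
        - S t * ∑ i, Real.exp (β * P t i) * (β * v i)) / Z t ^ 2) t :=
    fun t => (hSd t).div (hZd t) (hZpos t).ne'
  -- bound on the derivative
  have hbound : ∀ t : ℝ,
      |((∑ j, Real.exp (β * P t j) * (β * v j) * Q j) * Z t
        - S t * ∑ i, Real.exp (β * P t i) * (β * v i)) / Z t ^ 2| ≤ β * (d * ξ) := by
    intro t
    set w : Fin n → ℝ := fun j => Real.exp (β * P t j) / Z t with hw
    have hwnn : ∀ j, 0 ≤ w j := fun j => div_nonneg (Real.exp_pos _).le (hZpos t).le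
    have hw1 : ∑ j, w j = 1 := by
      rw [hw]
      rw [← Finset.sum_div]
      exact div_self (hZpos t).ne'
    have hcov := cov_abs_le w v Q hwnn hw1 hd0 hξ hvd hQ
    have heq : ((∑ j, Real.exp (β * P t j) * (β * v j) * Q j) * Z t
        - S t * ∑ i, Real.exp (β * P t i) * (β * v i)) / Z t ^ 2
        = β * ((∑ j, w j * (v j * Q j)) - (∑ j, w j * Q j) * (∑ j, w j * v j)) := by
      have e1 : ∑ j, Real.exp (β * P t j) * (β * v j) * Q j
          = β * ∑ j, Real.exp (β * P t j) * (v j * Q j) := by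
        rw [Finset.mul_sum]; exact Finset.sum_congr rfl fun j _ => by ring
      have e2 : ∑ i, Real.exp (β * P t i) * (β * v i)
          = β * ∑ i, Real.exp (β * P t i) * v i := by
        rw [Finset.mul_sum]; exact Finset.sum_congr rfl fun i _ => by ring
      have e3 : ∀ x : Fin n → ℝ, ∑ j, w j * x j = (∑ j, Real.exp (β * P t j) * x j) / Z t := by
        intro x
        rw [Finset.sum_div]
        refine Finset.sum_congr rfl fun j _ => ?_
        show Real.exp (β * P t j) / Z t * x j = _
        ring
      rw [e1, e2, e3, e3, e3]
      field_simp
      ring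
    rw [heq]
    rw [abs_mul, abs_of_pos hβ]
    have : |(∑ j, w j * (v j * Q j)) - (∑ j, w j * Q j) * (∑ j, w j * v j)| ≤ d * ξ := by
      rw [show (∑ j, w j * Q j) * (∑ j, w j * v j) = (∑ j, w j * v j) * (∑ j, w j * Q j) by ring]
      exact hcov
    exact mul_le_mul_of_nonneg_left this hβ.le
  have hmvt : |F 1 - F 0| ≤ β * (d * ξ) := by
    have h := Convex.norm_image_sub_le_of_norm_hasDerivWithin_le
      (f := F)
      (f' := fun t => ((∑ j, Real.exp (β * P t j) * (β * v j) * Q j) * Z t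
        - S t * ∑ i, Real.exp (β * P t i) * (β * v i)) / Z t ^ 2)
      (s := Set.univ) (C := β * (d * ξ))
      (fun x _ => (hFd x).hasDerivWithinAt)
      (fun x _ => by rw [Real.norm_eq_abs]; exact hbound x)
      convex_univ (Set.mem_univ 0) (Set.mem_univ 1)
    simpa [Real.norm_eq_abs] using h
  -- identify endpoints
  have hP1 : ∀ j, P 1 j = Q j := fun j => by simp [hP, hv]
  have hP0 : ∀ j, P 0 j = Qt j := fun j => by simp [hP]
  have hF1 : (∑ j, Real.exp (β * Q j) / (∑ i, Real.exp (β * Q i)) * Q j) = F 1 := by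
    show _ = (∑ j, Real.exp (β * P 1 j) * Q j) / (∑ i, Real.exp (β * P 1 i))
    simp only [hP1]
    rw [Finset.sum_div]
    exact Finset.sum_congr rfl fun j _ => by ring
  have hG2 : (∑ j, Real.exp (β * Qt j) / (∑ i, Real.exp (β * Qt i)) * Qt j)
      = (∑ j, Real.exp (β * P 0 j) * Qt j) / Z 0 := by
    show _ = (∑ j, Real.exp (β * P 0 j) * Qt j) / (∑ i, Real.exp (β * P 0 i))
    simp only [hP0]
    rw [Finset.sum_div]
    exact Finset.sum_congr rfl fun j _ => by ring
  have hstep0 : |F 0 - (∑ j, Real.exp (β * P 0 j) * Qt j) / Z 0| ≤ d := by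
    have heq : F 0 - (∑ j, Real.exp (β * P 0 j) * Qt j) / Z 0
        = (∑ j, Real.exp (β * P 0 j) * v j) / Z 0 := by
      rw [hF, hS, div_sub_div_same, ← Finset.sum_sub_distrib]
      refine congrArg (· / Z 0) (Finset.sum_congr rfl fun j _ => ?_)
      rw [hv]; ring
    rw [heq, abs_div, abs_of_pos (hZpos 0), div_le_iff₀ (hZpos 0)]
    calc |∑ j, Real.exp (β * P 0 j) * v j| ≤ ∑ j, |Real.exp (β * P 0 j) * v j| :=
          Finset.abs_sum_le_sum_abs _ _
      _ ≤ ∑ j, Real.exp (β * P 0 j) * d := by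
          refine Finset.sum_le_sum fun j _ => ?_
          rw [abs_mul, abs_of_pos (Real.exp_pos _)]
          exact mul_le_mul_of_nonneg_left (hvd j) (Real.exp_pos _).le
      _ = d * Z 0 := by rw [← Finset.sum_mul, hZ]; ring
  calc |(∑ j, Real.exp (β * Q j) / (∑ i, Real.exp (β * Q i)) * Q j) -
      ∑ j, Real.exp (β * Qt j) / (∑ i, Real.exp (β * Qt i)) * Qt j|
      = |(F 1 - F 0) + (F 0 - (∑ j, Real.exp (β * P 0 j) * Qt j) / Z 0)| := by
        rw [hF1, hG2]; congr 1; ring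
    _ ≤ |F 1 - F 0| + |F 0 - (∑ j, Real.exp (β * P 0 j) * Qt j) / Z 0| := abs_add_le _ _
    _ ≤ β * (d * ξ) + d := add_le_add hmvt hstep0
    _ = (1 + ξ * β) * d := by ring
end

section
/- Fix α = (α_1,...,α_n) ∈ ℝ^n and β > 0, and define f_α(Q) = ∑_j α_j e^{β q_j}/∑_i e^{β q_i}. Then for any Q, Q̃ ∈ ℝ^n, |f_α(Q) − f_α(Q̃)| ≤ (β ‖α‖_d / 2) ‖Q − Q̃‖_∞, where ‖α‖_d = max_{i,j} |α_i − α_j|. -/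
open Finset

lemma mad_le {n : ℕ} (p x : Fin n → ℝ) (hp : ∀ j, 0 ≤ p j) (hp1 : ∑ j, p j = 1)
    {L M : ℝ} (hL : ∀ j, L ≤ x j) (hM : ∀ j, x j ≤ M) :
    ∑ j, p j * |x j - ∑ k, p k * x k| ≤ (M - L) / 2 := by
  set m := ∑ k, p k * x k with hm
  have hn : n ≠ 0 := by
    rintro rfl; simp at hp1
  have hLm : L ≤ m := by
    calc L = ∑ j, p j * L := by rw [← Finset.sum_mul, hp1, one_mul]
    _ ≤ m := Finset.sum_le_sum fun j _ => mul_le_mul_of_nonneg_left (hL j) (hp j)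
  have hmM : m ≤ M := by
    calc m ≤ ∑ j : Fin n, p j * M :=
      Finset.sum_le_sum fun j _ => mul_le_mul_of_nonneg_left (hM j) (hp j)
    _ = M := by rw [← Finset.sum_mul, hp1, one_mul]
  set A : Finset (Fin n) := Finset.univ.filter (fun j => m < x j) with hA
  set S : ℝ := ∑ j ∈ A, p j with hS
  set T : ℝ := ∑ j ∈ A, p j * (x j - m) with hT
  have hzero : ∑ j, p j * (x j - m) = 0 := by
    simp only [mul_sub, Finset.sum_sub_distrib, ← Finset.sum_mul, hp1, one_mul]
    ring
  have hsplit : T + ∑ j ∈ Aᶜ, p j * (x j - m) = 0 := by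
    rw [hT, Finset.sum_add_sum_compl]; exact hzero
  have hT2 : T = ∑ j ∈ Aᶜ, p j * (m - x j) := by
    have : ∑ j ∈ Aᶜ, p j * (m - x j) = - ∑ j ∈ Aᶜ, p j * (x j - m) := by
      rw [← Finset.sum_neg_distrib]; apply Finset.sum_congr rfl; intros; ring
    linarith [hsplit, this]
  have hSsplit : S + ∑ j ∈ Aᶜ, p j = 1 := by
    rw [hS, Finset.sum_add_sum_compl]; exact hp1
  have hS0 : 0 ≤ S := Finset.sum_nonneg fun j _ => hp j
  have hS1 : S ≤ 1 := by
    have : (0:ℝ) ≤ ∑ j ∈ Aᶜ, p j := Finset.sum_nonneg fun j _ => hp j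
    linarith
  have hT0 : 0 ≤ T := Finset.sum_nonneg fun j hj => by
    have := (Finset.mem_filter.mp hj).2
    exact mul_nonneg (hp j) (by linarith)
  have hTub1 : T ≤ S * (M - m) := by
    rw [hT, hS, Finset.sum_mul]
    exact Finset.sum_le_sum fun j _ => mul_le_mul_of_nonneg_left (by linarith [hM j]) (hp j)
  have hTub2 : T ≤ (1 - S) * (m - L) := by
    rw [hT2]
    have : (1 - S) = ∑ j ∈ Aᶜ, p j := by linarith
    rw [this, Finset.sum_mul]
    exact Finset.sum_le_sum fun j _ => mul_le_mul_of_nonneg_left (by linarith [hL j]) (hp j)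
  have hmad : ∑ j, p j * |x j - m| = 2 * T := by
    rw [← Finset.sum_add_sum_compl A]
    have h1 : ∑ j ∈ A, p j * |x j - m| = T := by
      rw [hT]; apply Finset.sum_congr rfl; intro j hj
      have := (Finset.mem_filter.mp hj).2
      rw [abs_of_pos (by linarith)]
    have h2 : ∑ j ∈ Aᶜ, p j * |x j - m| = T := by
      rw [hT2]; apply Finset.sum_congr rfl; intro j hj
      have hj' : ¬ m < x j := by
        simpa [hA] using (Finset.mem_compl.mp hj)
      rw [abs_of_nonpos (by push_neg at hj'; linarith)]; ring
    rw [h1, h2]; ring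
  rw [hmad]
  nlinarith [mul_le_mul hTub1 hTub2 hT0 (by nlinarith : (0:ℝ) ≤ S * (M - m)),
    sq_nonneg (2*S - 1), sq_nonneg ((M - m) - (m - L)), sq_nonneg (M - L),
    mul_nonneg (mul_nonneg hS0 (by linarith : (0:ℝ) ≤ 1 - S)) (sq_nonneg ((M-m)-(m-L)))]

lemma cov_bound {n : ℕ} (p a v : Fin n → ℝ) (hp : ∀ j, 0 ≤ p j) (hp1 : ∑ j, p j = 1)
    {D Sv : ℝ} (hD : ∀ i j, |a i - a j| ≤ D) (hSv : ∀ j, |v j| ≤ Sv) :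
    |(∑ j, p j * (a j * v j)) - (∑ j, p j * a j) * (∑ j, p j * v j)| ≤ D / 2 * Sv := by
  have hn : n ≠ 0 := by rintro rfl; simp at hp1
  have : NeZero n := ⟨hn⟩
  obtain ⟨i₁, -, h1⟩ := Finset.exists_max_image Finset.univ a ⟨0, Finset.mem_univ 0⟩
  obtain ⟨i₂, -, h2⟩ := Finset.exists_min_image Finset.univ a ⟨0, Finset.mem_univ 0⟩
  set m := ∑ k, p k * v k with hm
  set c := (a i₁ + a i₂) / 2 with hc
  have hdiam : a i₁ - a i₂ ≤ D := le_trans (le_abs_self _) (hD i₁ i₂)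
  have hac : ∀ j, |a j - c| ≤ D / 2 := by
    intro j
    have := h1 j (Finset.mem_univ j)
    have := h2 j (Finset.mem_univ j)
    rw [abs_le]; constructor <;> [skip; skip] <;> simp only [hc] <;> linarith
  have key : (∑ j, p j * (a j * v j)) - (∑ j, p j * a j) * m
      = ∑ j, p j * ((a j - c) * (v j - m)) := by
    have h : ∀ j : Fin n, p j * ((a j - c) * (v j - m))
        = p j * (a j * v j) - c * (p j * v j) - m * (p j * a j) + (c * m) * p j := by
      intro j; ring
    rw [Finset.sum_congr rfl (fun j _ => h j)]
    simp only [Finset.sum_add_distrib, Finset.sum_sub_distrib, ← Finset.mul_sum, ← hm, hp1]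
    ring
  rw [key]
  have hD0 : 0 ≤ D := le_trans (abs_nonneg _) (hD 0 0)
  calc |∑ j, p j * ((a j - c) * (v j - m))| ≤ ∑ j, |p j * ((a j - c) * (v j - m))| :=
        Finset.abs_sum_le_sum_abs _ _
    _ ≤ ∑ j, p j * (D / 2 * |v j - m|) := by
        apply Finset.sum_le_sum; intro j _
        rw [abs_mul, abs_mul, abs_of_nonneg (hp j)]
        exact mul_le_mul_of_nonneg_left
          (mul_le_mul_of_nonneg_right (hac j) (abs_nonneg _)) (hp j)
    _ = D / 2 * ∑ j, p j * |v j - m| := by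
        rw [Finset.mul_sum]; apply Finset.sum_congr rfl; intros; ring
    _ ≤ D / 2 * Sv := by
        apply mul_le_mul_of_nonneg_left _ (by linarith)
        have := mad_le p v hp hp1 (L := -Sv) (M := Sv)
          (fun j => neg_le_of_abs_le (hSv j)) (fun j => le_of_abs_le (hSv j))
        rw [← hm] at this
        linarith

/-- Sharp Lipschitz constant for a fixed linear functional of the Boltzmann
distribution: |f_α(Q) − f_α(Q̃)| ≤ (β‖α‖_d/2)‖Q − Q̃‖_∞ where
‖α‖_d = max_{i,j}|α_i − α_j|. -/
theorem boltzmann_linear_functional_lipschitz (n : ℕ) (β : ℝ) (hβ : 0 < β)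
    (a Q Qt : Fin n → ℝ) :
    |(∑ j, a j * Real.exp (β * Q j) / (∑ i, Real.exp (β * Q i))) -
      ∑ j, a j * Real.exp (β * Qt j) / (∑ i, Real.exp (β * Qt i))| ≤
      β * (⨆ i, ⨆ j, |a i - a j|) / 2 * ⨆ i, |Q i - Qt i| := by
  rcases Nat.eq_zero_or_pos n with rfl | hn
  · simp [Real.iSup_of_isEmpty]
  have hne : (Finset.univ : Finset (Fin n)).Nonempty := by
    have : NeZero n := ⟨hn.ne'⟩; exact Finset.univ_nonempty
  set D := ⨆ i, ⨆ j, |a i - a j| with hDdef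
  set Sv := ⨆ i, |Q i - Qt i| with hSvdef
  have hbdd : ∀ (f : Fin n → ℝ), BddAbove (Set.range f) := fun f =>
    (Set.finite_range f).bddAbove
  have hD : ∀ i j, |a i - a j| ≤ D := by
    intro i j
    refine le_trans (le_ciSup (f := fun j => |a i - a j|) (hbdd _) j) ?_
    exact le_ciSup (f := fun i => ⨆ j, |a i - a j|) (hbdd _) i
  have hSv : ∀ j, |Qt j - Q j| ≤ Sv := fun j => by
    rw [abs_sub_comm]; exact le_ciSup (f := fun i => |Q i - Qt i|) (hbdd _) j
  set v : Fin n → ℝ := fun j => Qt j - Q j with hv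
  set e : ℝ → Fin n → ℝ := fun t j => Real.exp (β * (Q j + t * v j)) with he
  set Z : ℝ → ℝ := fun t => ∑ i, e t i with hZ
  set N : ℝ → ℝ := fun t => ∑ j, a j * e t j with hN
  set F : ℝ → ℝ := fun t => N t / Z t with hF
  set F' : ℝ → ℝ := fun t =>
    ((∑ j, a j * (e t j * (β * v j))) * Z t - N t * (∑ j, e t j * (β * v j))) / (Z t) ^ 2
    with hF'
  have hZpos : ∀ t, 0 < Z t := fun t =>
    Finset.sum_pos (fun i _ => Real.exp_pos _) hne
  have hderiv : ∀ t, HasDerivAt F (F' t) t := by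
    intro t
    have hexp : ∀ j, HasDerivAt (fun t => e t j) (e t j * (β * v j)) t := by
      intro j
      have h1 : HasDerivAt (fun t : ℝ => β * (Q j + t * v j)) (β * v j) t := by
        simpa using (((hasDerivAt_id t).mul_const (v j)).const_add (Q j)).const_mul β
      simpa [he] using h1.exp
    have hNd : HasDerivAt N (∑ j, a j * (e t j * (β * v j))) t :=
      HasDerivAt.fun_sum fun j _ => (hexp j).const_mul (a j)
    have hZd : HasDerivAt Z (∑ j, e t j * (β * v j)) t :=
      HasDerivAt.fun_sum fun j _ => hexp j
    exact hNd.div hZd (hZpos t).ne'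
  have hbound : ∀ t, |F' t| ≤ β * D / 2 * Sv := by
    intro t
    have hZt := hZpos t
    set p : Fin n → ℝ := fun j => e t j / Z t with hp
    have hp0 : ∀ j, 0 ≤ p j := fun j => div_nonneg (Real.exp_pos _).le hZt.le
    have hp1 : ∑ j, p j = 1 := by
      simp only [hp, ← Finset.sum_div]
      exact div_self hZt.ne'
    have hrew : F' t = β * ((∑ j, p j * (a j * v j)) -
        (∑ j, p j * a j) * (∑ j, p j * v j)) := by
      have e1 : ∑ j, a j * (e t j * (β * v j)) = β * ∑ j, a j * v j * e t j := by
        rw [Finset.mul_sum]; exact Finset.sum_congr rfl fun j _ => by ring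
      have e2 : ∑ j, e t j * (β * v j) = β * ∑ j, v j * e t j := by
        rw [Finset.mul_sum]; exact Finset.sum_congr rfl fun j _ => by ring
      have e3 : ∑ j, p j * (a j * v j) = (∑ j, a j * v j * e t j) / Z t := by
        simp only [hp, div_mul_eq_mul_div, ← Finset.sum_div]
        congr 1; exact Finset.sum_congr rfl fun j _ => by ring
      have e4 : ∑ j, p j * a j = (∑ j, a j * e t j) / Z t := by
        simp only [hp, div_mul_eq_mul_div, ← Finset.sum_div]
        congr 1; exact Finset.sum_congr rfl fun j _ => by ring
      have e5 : ∑ j, p j * v j = (∑ j, v j * e t j) / Z t := by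
        simp only [hp, div_mul_eq_mul_div, ← Finset.sum_div]
        congr 1; exact Finset.sum_congr rfl fun j _ => by ring
      simp only [hF', hN, e1, e2, e3, e4, e5]
      field_simp
    rw [hrew, abs_mul, abs_of_pos hβ]
    have := cov_bound p a v hp0 hp1 hD hSv
    calc β * |_| ≤ β * (D / 2 * Sv) := mul_le_mul_of_nonneg_left this hβ.le
      _ = β * D / 2 * Sv := by ring
  have key : ‖F 1 - F 0‖ ≤ β * D / 2 * Sv := by
    apply norm_image_sub_le_of_norm_deriv_le_segment_01'
      (f' := F') (fun x _ => (hderiv x).hasDerivWithinAt)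
    intro x _
    rw [Real.norm_eq_abs]; exact hbound x
  rw [Real.norm_eq_abs] at key
  have h0 : F 0 = ∑ j, a j * Real.exp (β * Q j) / (∑ i, Real.exp (β * Q i)) := by
    simp only [hF, hN, hZ, he, Finset.sum_div]
    norm_num
  have h1 : F 1 = ∑ j, a j * Real.exp (β * Qt j) / (∑ i, Real.exp (β * Qt i)) := by
    simp only [hF, hN, hZ, he, hv, Finset.sum_div]
    norm_num
  rw [← h0, ← h1, abs_sub_comm]
  exact key
end

section
/- Let A ∈ ℝ^{n×n} be the matrix with A_{ij} = α_i − α_j for a fixed vector α, and let w ∈ ℝ^n have positive entries. Then for any choice of signs b ∈ {−1,+1}^n, |(b ∘ w)^T A w| ≤ 2 ‖α‖_d (∑_{i ∈ I_+} w_i)(∑_{j ∈ I_−} w_j), where I_± are the index sets where b_i = ±1, b ∘ w denotes the entrywise product, and ‖α‖_d = max_{i,j}|α_i − α_j|. -/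
open Finset in
/-- Antisymmetric-matrix estimate: for A_{ij} = α_i − α_j, positive weights w,
and signs b ∈ {−1,+1}^n,
|(b∘w)^T A w| ≤ 2‖α‖_d (∑_{i∈I₊} w_i)(∑_{j∈I₋} w_j). -/
theorem antisymmetric_sign_estimate (n : ℕ) (a w b : Fin n → ℝ)
    (hw : ∀ i, 0 < w i) (hb : ∀ i, b i = 1 ∨ b i = -1) :
    |∑ i, ∑ j, (b i * w i) * (a i - a j) * w j| ≤
      2 * (⨆ i, ⨆ j, |a i - a j|) *
        (∑ i ∈ univ.filter fun i => b i = 1, w i) *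
        (∑ j ∈ univ.filter fun j => b j = -1, w j) := by
  set M := ⨆ i, ⨆ j, |a i - a j| with hMdef
  set S := ∑ i, ∑ j, (b i * w i) * (a i - a j) * w j with hSdef
  set SP := ∑ i ∈ univ.filter (fun i => b i = 1), w i with hSPdef
  set SN := ∑ j ∈ univ.filter (fun j => b j = -1), w j with hSNdef
  have hMb : ∀ i j, |a i - a j| ≤ M := by
    intro i j
    rw [hMdef]
    exact le_trans
      (le_ciSup (f := fun j => |a i - a j|) (Set.finite_range _).bddAbove j)
      (le_ciSup (f := fun i => ⨆ j, |a i - a j|) (Set.finite_range _).bddAbove i)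
  have hM0 : 0 ≤ M := by
    rcases Nat.eq_zero_or_pos n with h | h
    · subst h
      simp [hMdef, Real.iSup_of_isEmpty]
    · exact le_trans (abs_nonneg (a ⟨0, h⟩ - a ⟨0, h⟩)) (hMb ⟨0, h⟩ ⟨0, h⟩)
  -- split sums by sign
  have hsplit : ∀ f : Fin n → ℝ, ∑ i, f i =
      ∑ i ∈ univ.filter (fun i => b i = 1), f i +
      ∑ i ∈ univ.filter (fun i => b i = -1), f i := by
    intro f
    rw [← Finset.sum_filter_add_sum_filter_not univ (fun i => b i = 1) f]
    congr 1
    apply Finset.sum_congr ?_ (fun _ _ => rfl)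
    ext i
    simp only [Finset.mem_filter, Finset.mem_univ, true_and]
    rcases hb i with h | h <;> rw [h] <;> norm_num
  have hw1 : ∑ i, w i = SP + SN := hsplit w
  have hw2 : ∑ i, b i * w i = SP - SN := by
    rw [hsplit (fun i => b i * w i)]
    have h1 : ∑ i ∈ univ.filter (fun i => b i = 1), b i * w i = SP :=
      Finset.sum_congr rfl fun i hi => by
        rw [(Finset.mem_filter.mp hi).2, one_mul]
    have h2 : ∑ i ∈ univ.filter (fun i => b i = -1), b i * w i = -SN := by
      rw [hSNdef, ← Finset.sum_neg_distrib]
      exact Finset.sum_congr rfl fun i hi => by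
        rw [(Finset.mem_filter.mp hi).2]; ring
    rw [h1, h2]; ring
  -- symmetrize
  have hdouble : 2 * S = ∑ i, ∑ j, ((b i - b j) * (a i - a j)) * (w i * w j) := by
    have hc : S = ∑ i, ∑ j, (b j * w j) * (a j - a i) * w i := by
      rw [hSdef]
      exact Finset.sum_comm
    calc 2 * S = S + S := by ring
      _ = ∑ i, ∑ j, ((b i * w i) * (a i - a j) * w j
            + (b j * w j) * (a j - a i) * w i) := by
          nth_rewrite 2 [hc]
          nth_rewrite 1 [hSdef]
          rw [← Finset.sum_add_distrib]
          exact Finset.sum_congr rfl fun i _ => (Finset.sum_add_distrib).symm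
      _ = ∑ i, ∑ j, ((b i - b j) * (a i - a j)) * (w i * w j) := by
          exact Finset.sum_congr rfl fun i _ =>
            Finset.sum_congr rfl fun j _ => by ring
  -- bound each term
  have habs : |∑ i, ∑ j, ((b i - b j) * (a i - a j)) * (w i * w j)| ≤
      ∑ i, ∑ j, (1 - b i * b j) * M * (w i * w j) := by
    refine (Finset.abs_sum_le_sum_abs _ _).trans ?_
    apply Finset.sum_le_sum; intro i _
    refine (Finset.abs_sum_le_sum_abs _ _).trans ?_
    apply Finset.sum_le_sum; intro j _
    have hb' : |b i - b j| = 1 - b i * b j := by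
      rcases hb i with h | h <;> rcases hb j with h' | h' <;>
        rw [h, h'] <;> norm_num
    have hwnn : (0:ℝ) ≤ w i * w j := le_of_lt (mul_pos (hw i) (hw j))
    rw [abs_mul, abs_mul, abs_of_nonneg hwnn, hb']
    have h1 : (1 - b i * b j) * |a i - a j| ≤ (1 - b i * b j) * M := by
      apply mul_le_mul_of_nonneg_left (hMb i j)
      rw [← hb']; exact abs_nonneg _
    exact mul_le_mul_of_nonneg_right h1 hwnn
  -- compute the right-hand sum
  have hcomp : ∑ i, ∑ j, (1 - b i * b j) * M * (w i * w j) =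
      M * ((∑ i, w i) * (∑ j, w j) - (∑ i, b i * w i) * (∑ j, b j * w j)) := by
    rw [Finset.sum_mul_sum, Finset.sum_mul_sum, ← Finset.sum_sub_distrib,
      Finset.mul_sum]
    refine Finset.sum_congr rfl fun i _ => ?_
    rw [← Finset.sum_sub_distrib, Finset.mul_sum]
    exact Finset.sum_congr rfl fun j _ => by ring
  have hfin : |2 * S| ≤ 4 * M * SP * SN := by
    rw [hdouble]
    refine habs.trans ?_
    rw [hcomp, hw1, hw2]
    apply le_of_eq; ring
  rw [abs_mul, abs_two] at hfin
  have : |S| ≤ 2 * M * SP * SN := by linarith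
  linarith
end

section
/- Let (Δ_k)_{k≥1} and (Λ_k)_{k≥1} be nonnegative sequences of vectors Δ_k = (Δ_k^0, ..., Δ_k^T), Λ_k = (Λ_k^0, ..., Λ_k^T) satisfying: Λ_k^0 = 0, Λ_k^t ≤ 2β Δ_k^{t−1} + Λ_k^{t−1} for 1 ≤ t ≤ T, and Δ_k^t ≤ L ∑_{j=0}^{T−t} S^j Λ_{k−1}^{t+j} for 0 ≤ t ≤ T, with constants L, β ≥ 0 and S ≥ 1. Then max_t Δ_k^t ≤ 2Lβ S (T S^{T+1} − (T+1)S^T + 1)/(S−1)^2 · max_t Δ_{k−1}^t (for S > 1). In particular, if this coefficient is < 1, then max_t Δ_k^t → 0 geometrically as k → ∞. -/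
open Finset

lemma sum_j_pow_identity (x : ℝ) (n : ℕ) :
    (x - 1) ^ 2 * ∑ j ∈ range (n + 1), (j : ℝ) * x ^ j
      = x * ((n : ℝ) * x ^ (n + 1) - ((n : ℝ) + 1) * x ^ n + 1) := by
  induction n with
  | zero => norm_num
  | succ n ih =>
    rw [sum_range_succ, mul_add, ih]
    push_cast
    ring

open Finset in
/-- Abstract recursion underlying the convergence of the forward-backward
algorithm: under the coupled recursive bounds on Δ (Q-function changes) and
Λ (occupancy-measure changes), the max of Δ contracts across iterations with
coefficient C = 2LβS(T S^{T+1} − (T+1)S^T + 1)/(S−1)², and if C < 1 then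
max_t Δ_k^t → 0 as k → ∞. -/
theorem forward_backward_contraction (T : ℕ) (hT : 1 ≤ T)
    (L β S : ℝ) (hL : 0 ≤ L) (hβ : 0 ≤ β) (hS : 1 < S)
    (Δ Λ : ℕ → ℕ → ℝ)
    (hΔnn : ∀ k t, 0 ≤ Δ k t) (hΛnn : ∀ k t, 0 ≤ Λ k t)
    (hΛ0 : ∀ k, Λ k 0 = 0)
    (hΛ : ∀ k, 1 ≤ k → ∀ t, 1 ≤ t → t ≤ T →
      Λ k t ≤ 2 * β * Δ k (t - 1) + Λ k (t - 1))
    (hΔ : ∀ k, 1 ≤ k → ∀ t, t ≤ T →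
      Δ k t ≤ L * ∑ j ∈ range (T - t + 1), S ^ j * Λ (k - 1) (t + j)) :
    (∀ k, 2 ≤ k →
      (range (T + 1)).sup' Finset.nonempty_range_add_one (Δ k) ≤
        (2 * L * β * S * ((T : ℝ) * S ^ (T + 1) - (T + 1) * S ^ T + 1) /
            (S - 1) ^ 2) *
          (range (T + 1)).sup' Finset.nonempty_range_add_one (Δ (k - 1))) ∧
      (2 * L * β * S * ((T : ℝ) * S ^ (T + 1) - (T + 1) * S ^ T + 1) /
          (S - 1) ^ 2 < 1 →
        Filter.Tendsto
          (fun k => (range (T + 1)).sup' Finset.nonempty_range_add_one (Δ k))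
          Filter.atTop (nhds 0)) := by
  have hS0 : (0:ℝ) < S := lt_trans one_pos hS
  set K : ℝ := ∑ j ∈ range (T + 1), (j : ℝ) * S ^ j with hKdef
  have hKnn : 0 ≤ K :=
    Finset.sum_nonneg fun j _ => mul_nonneg (Nat.cast_nonneg j) (pow_nonneg hS0.le j)
  have hCeq : 2 * L * β * S * ((T : ℝ) * S ^ (T + 1) - (T + 1) * S ^ T + 1) /
      (S - 1) ^ 2 = 2 * L * β * K := by
    rw [div_eq_iff (by nlinarith : ((S - 1) ^ 2 : ℝ) ≠ 0), hKdef]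
    push_cast
    linear_combination (-(2 * L * β)) * sum_j_pow_identity S T
  set M : ℕ → ℝ := fun k => (range (T + 1)).sup' Finset.nonempty_range_add_one (Δ k)
    with hMdef
  have hMnn : ∀ k, 0 ≤ M k := fun k =>
    le_trans (hΔnn k 0) (Finset.le_sup' _ (mem_range.mpr (Nat.succ_pos T)))
  have hΔleM : ∀ k t, t ≤ T → Δ k t ≤ M k := fun k t ht =>
    Finset.le_sup' _ (mem_range.mpr (Nat.lt_succ_of_le ht))
  -- Λ bound
  have hΛbound : ∀ k, 1 ≤ k → ∀ t, t ≤ T → Λ k t ≤ 2 * β * t * M k := by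
    intro k hk t
    induction t with
    | zero => intro _; rw [hΛ0]; simp
    | succ t ih =>
      intro ht
      have ht' : t ≤ T := le_trans (Nat.le_succ t) ht
      have h1 := hΛ k hk (t + 1) (Nat.succ_le_succ (Nat.zero_le t)) ht
      simp only [Nat.add_sub_cancel] at h1
      have h2 := ih ht'
      have h3 := hΔleM k t ht'
      have h4 := mul_le_mul_of_nonneg_left h3 (by linarith : (0:ℝ) ≤ 2 * β)
      push_cast
      linarith
  -- contraction
  have hcontr : ∀ k, 2 ≤ k → M k ≤ 2 * L * β * K * M (k - 1) := by
    intro k hk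
    apply Finset.sup'_le
    intro t htm
    have ht : t ≤ T := Nat.lt_succ_iff.mp (mem_range.mp htm)
    have hk1 : 1 ≤ k := le_trans one_le_two hk
    have hk1' : 1 ≤ k - 1 := by omega
    have hsum : ∑ j ∈ range (T - t + 1), ((t + j : ℕ) : ℝ) * S ^ j ≤ K := by
      have step1 : ∑ j ∈ range (T - t + 1), ((t + j : ℕ) : ℝ) * S ^ j
          ≤ ∑ j ∈ range (T - t + 1), ((t + j : ℕ) : ℝ) * S ^ (t + j) := by
        apply Finset.sum_le_sum
        intro j _
        exact mul_le_mul_of_nonneg_left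
          (pow_le_pow_right₀ hS.le (Nat.le_add_left j t)) (Nat.cast_nonneg _)
      have step2 : ∑ i ∈ Ico t (T + 1), (i : ℝ) * S ^ i
          = ∑ j ∈ range (T - t + 1), ((t + j : ℕ) : ℝ) * S ^ (t + j) := by
        rw [Finset.sum_Ico_eq_sum_range, show T + 1 - t = T - t + 1 from by omega]
      have step3 : ∑ i ∈ Ico t (T + 1), (i : ℝ) * S ^ i ≤ K := by
        apply Finset.sum_le_sum_of_subset_of_nonneg
        · intro i hi
          exact mem_range.mpr (mem_Ico.mp hi).2
        · intro i _ _
          exact mul_nonneg (Nat.cast_nonneg i) (pow_nonneg hS0.le i)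
      calc _ ≤ _ := step1
        _ = _ := step2.symm
        _ ≤ K := step3
    calc Δ k t ≤ L * ∑ j ∈ range (T - t + 1), S ^ j * Λ (k - 1) (t + j) :=
          hΔ k hk1 t ht
      _ ≤ L * ∑ j ∈ range (T - t + 1),
            S ^ j * (2 * β * ((t + j : ℕ) : ℝ) * M (k - 1)) := by
          apply mul_le_mul_of_nonneg_left _ hL
          apply Finset.sum_le_sum
          intro j hj
          have htj : t + j ≤ T := by
            have := mem_range.mp hj; omega
          exact mul_le_mul_of_nonneg_left (hΛbound (k - 1) hk1' (t + j) htj)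
            (pow_nonneg hS0.le j)
      _ = 2 * L * β * M (k - 1) *
            ∑ j ∈ range (T - t + 1), ((t + j : ℕ) : ℝ) * S ^ j := by
          rw [Finset.mul_sum, Finset.mul_sum]
          apply Finset.sum_congr rfl
          intro j _
          ring
      _ ≤ 2 * L * β * M (k - 1) * K := by
          apply mul_le_mul_of_nonneg_left hsum
          have := hMnn (k - 1)
          positivity
      _ = 2 * L * β * K * M (k - 1) := by ring
  constructor
  · intro k hk
    rw [hCeq]
    exact hcontr k hk
  · intro hC
    rw [hCeq] at hC
    set C : ℝ := 2 * L * β * K with hCdef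
    have hCnn : 0 ≤ C := by positivity
    have hbd : ∀ k, 2 ≤ k → M k ≤ C ^ (k - 2) * M 2 := by
      intro k hk
      induction k, hk using Nat.le_induction with
      | base => simp
      | succ k hk ih =>
        have h1 : M (k + 1) ≤ C * M k := by
          have := hcontr (k + 1) (by omega)
          simpa using this
        have h2 : C * M k ≤ C * (C ^ (k - 2) * M 2) :=
          mul_le_mul_of_nonneg_left (ih) hCnn
        have h3 : C * (C ^ (k - 2) * M 2) = C ^ (k + 1 - 2) * M 2 := by
          rw [← mul_assoc, ← pow_succ']
          congr 2
          omega
        linarith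
    have hg : Filter.Tendsto (fun k => C ^ (k - 2) * M 2) Filter.atTop (nhds 0) := by
      have h1 : Filter.Tendsto (fun k : ℕ => C ^ (k - 2)) Filter.atTop (nhds 0) :=
        (tendsto_pow_atTop_nhds_zero_of_lt_one hCnn hC).comp
          (Filter.tendsto_sub_atTop_nat 2)
      simpa using h1.mul_const (M 2)
    apply squeeze_zero' (Filter.Eventually.of_forall fun k => hMnn k) _ hg
    filter_upwards [Filter.eventually_ge_atTop 2] with k hk
    exact hbd k hk
end

section
/- For 0 < λ < 1 and 1 > α ≥ (1−λ)·max{1, 2λ}, the function h_α(x) = α x (λ e^x + (1−λ)) − 2λ(1−λ)(e^x − 1) is nonnegative for all x ≥ 0. -/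
/-- Key inequality: 2(e^x - 1) ≤ x(e^x + 1) for x ≥ 0. -/
lemma two_exp_sub_one_le (x : ℝ) (hx : 0 ≤ x) :
    2 * (Real.exp x - 1) ≤ x * (Real.exp x + 1) := by
  set g : ℝ → ℝ := fun t => t * Real.exp t + t - 2 * Real.exp t + 2 with hg
  have hderiv : ∀ t : ℝ, HasDerivAt g (t * Real.exp t + 1 - Real.exp t) t := by
    intro t
    have h1 : HasDerivAt (fun t : ℝ => t * Real.exp t)
        (1 * Real.exp t + t * Real.exp t) t :=
      (hasDerivAt_id t).mul (Real.hasDerivAt_exp t)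
    have h2 : HasDerivAt g (1 * Real.exp t + t * Real.exp t + 1 - 2 * Real.exp t + 0) t :=
      (((h1.add (hasDerivAt_id t)).sub ((Real.hasDerivAt_exp t).const_mul 2)).add
        (hasDerivAt_const t 2))
    convert h2 using 1; ring
  have hdnonneg : ∀ t : ℝ, 0 ≤ t → 0 ≤ t * Real.exp t + 1 - Real.exp t := by
    intro t ht
    have h1 : -t + 1 ≤ Real.exp (-t) := Real.add_one_le_exp (-t)
    have h2 : Real.exp (-t) * Real.exp t = 1 := by
      rw [← Real.exp_add]; simp
    nlinarith [Real.exp_pos t]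
  have hmono : MonotoneOn g (Set.Ici (0:ℝ)) := by
    apply monotoneOn_of_deriv_nonneg (convex_Ici 0)
    · exact Continuous.continuousOn (by continuity)
    · intro t _
      exact (hderiv t).differentiableAt.differentiableWithinAt
    · intro t ht
      rw [(hderiv t).deriv]
      exact hdnonneg t (le_of_lt (by simpa using ht))
  have h0 : g 0 ≤ g x := hmono (Set.self_mem_Ici) (Set.mem_Ici.mpr hx) hx
  have hg0 : g 0 = 0 := by simp [hg]
  have : (0:ℝ) ≤ x * Real.exp x + x - 2 * Real.exp x + 2 := by
    rw [hg0] at h0; simpa [hg] using h0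
  linarith

/-- Base case of the exponential-smoothing lemma: for 0 < λ < 1 and
(1−λ)·max{1, 2λ} ≤ α < 1, the function
h_α(x) = αx(λe^x + (1−λ)) − 2λ(1−λ)(e^x − 1) is nonnegative for x ≥ 0. -/
theorem h_alpha_nonneg (lam α : ℝ) (hlam0 : 0 < lam) (hlam1 : lam < 1)
    (hα : (1 - lam) * max 1 (2 * lam) ≤ α) (hα1 : α < 1) :
    ∀ x : ℝ, 0 ≤ x →
      0 ≤ α * x * (lam * Real.exp x + (1 - lam)) -
            2 * lam * (1 - lam) * (Real.exp x - 1) := by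
  intro x hx
  have hkey := two_exp_sub_one_le x hx
  have hE : 1 ≤ Real.exp x := Real.one_le_exp hx
  set E := Real.exp x with hEdef
  rcases le_or_gt lam (1/2) with hc | hc
  · have hmax : max 1 (2 * lam) = 1 := max_eq_left (by linarith)
    have hα' : 1 - lam ≤ α := by rw [hmax, mul_one] at hα; exact hα
    -- chain: 2λ(1-λ)(E-1) ≤ λ(1-λ)x(E+1) ≤ (1-λ)x(λE+1-λ) ≤ αx(λE+1-λ)
    nlinarith [mul_le_mul_of_nonneg_left hkey
        (by nlinarith : (0:ℝ) ≤ lam * (1 - lam)),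
      mul_nonneg (mul_nonneg hx (by linarith : (0:ℝ) ≤ 1 - 2*lam))
        (by linarith : (0:ℝ) ≤ 1 - lam),
      mul_nonneg (mul_nonneg hx (by linarith : (0:ℝ) ≤ α - (1 - lam)))
        (by nlinarith : (0:ℝ) ≤ lam * E + (1 - lam))]
  · have hmax : max 1 (2 * lam) = 2 * lam := max_eq_right (by linarith)
    have hα' : (1 - lam) * (2 * lam) ≤ α := by rw [hmax] at hα; exact hα
    nlinarith [mul_le_mul_of_nonneg_left hkey
        (by nlinarith : (0:ℝ) ≤ lam * (1 - lam)),
      mul_nonneg (mul_nonneg hx (by linarith : (0:ℝ) ≤ 2*lam - 1))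
        (mul_nonneg (by nlinarith : (0:ℝ) ≤ lam * (1 - lam)) (by linarith : (0:ℝ) ≤ E - 1)),
      mul_nonneg (mul_nonneg hx (by nlinarith : (0:ℝ) ≤ α - (1 - lam) * (2 * lam)))
        (by nlinarith : (0:ℝ) ≤ lam * E + (1 - lam))]
end
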